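/- There exist real sequences (a_k) and (b_k) with b_k < 0 for all k, b_k → −∞, Σ_k |a_k| |b_k|^n < ∞ for every non-negative integer n, and Σ_k a_k (b_k)^n = 1 for every non-negative integer n. -/

import Mathlib

open Filter


noncomputable section Seeley

open Finset Polynomial Topology

/-- nodes -/
def bb (k : ℕ) : ℝ := -(2 ^ k)

/-- factor of the Lagrange weight -/
def gg (k j : ℕ) : ℝ := if j = k then 1 else (1 + 2 ^ j) / (2 ^ j - 2 ^ k)

/-- finite Lagrange weight evaluated at 1, nodes `bb 0, …, bb (N-1)` -/
def ww (k N : ℕ) : ℝ := ∏ j ∈ Finset.range N, gg k j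

/-- the bound -/
def DD (k : ℕ) : ℝ := (∏ j ∈ Finset.range k, (2:ℝ) ^ (j + 2)) / ((2:ℝ) ^ k) ^ k

lemma bb_injOn (N : ℕ) : Set.InjOn bb (Finset.range N) := by
  have : Function.Injective bb := by
    intro i j h
    simp only [bb, neg_inj] at h
    rcases lt_trichotomy i j with hij | hij | hij
    · exact absurd h (pow_lt_pow_right₀ one_lt_two hij).ne
    · exact hij
    · exact absurd h.symm (pow_lt_pow_right₀ one_lt_two hij).ne
  exact this.injOn

lemma bb_neg (k : ℕ) : bb k < 0 := by
  simp only [bb, neg_neg, Left.neg_neg_iff]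
  positivity

lemma pow_lt_pow_base2 {j k : ℕ} (h : j < k) : (2:ℝ) ^ j < 2 ^ k :=
  pow_lt_pow_right₀ one_lt_two h

lemma gg_pos_of_gt {k j : ℕ} (h : k < j) : 0 < gg k j := by
  rw [gg, if_neg (by omega)]
  have := pow_lt_pow_base2 h
  have : (0:ℝ) < 2 ^ j - 2 ^ k := by linarith
  positivity

lemma one_le_gg_of_gt {k j : ℕ} (h : k < j) : 1 ≤ gg k j := by
  rw [gg, if_neg (by omega)]
  have h1 := pow_lt_pow_base2 h
  have h2 : (0:ℝ) < 2 ^ j - 2 ^ k := by linarith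
  rw [le_div_iff₀ h2]
  have : (0:ℝ) < 2 ^ k := by positivity
  linarith

lemma gg_neg_of_lt {k j : ℕ} (h : j < k) : gg k j < 0 := by
  rw [gg, if_neg (by omega)]
  have h1 := pow_lt_pow_base2 h
  have h2 : (0:ℝ) < 1 + 2 ^ j := by positivity
  exact div_neg_of_pos_of_neg h2 (by linarith)

lemma gg_ne_zero (k j : ℕ) : gg k j ≠ 0 := by
  rcases lt_trichotomy j k with h | h | h
  · exact (gg_neg_of_lt h).ne
  · simp [gg, h]
  · exact (gg_pos_of_gt h).ne'

/-- head factor bound -/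
lemma abs_gg_le_of_lt {k j : ℕ} (h : j < k) : |gg k j| ≤ 2 ^ (j + 2) / 2 ^ k := by
  rw [abs_of_neg (gg_neg_of_lt h), gg, if_neg (by omega)]
  have h1 := pow_lt_pow_base2 h
  have h2 : (0:ℝ) < 2 ^ k - 2 ^ j := by linarith
  have h3 : (0:ℝ) < 2 ^ k := by positivity
  rw [← div_neg, neg_sub, div_le_div_iff₀ h2 h3]
  have hx : (2:ℝ) ^ j * 2 ≤ 2 ^ k := by
    calc (2:ℝ) ^ j * 2 = 2 ^ (j+1) := by ring
    _ ≤ 2 ^ k := pow_le_pow_right₀ one_le_two h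
  have hj : (1:ℝ) ≤ 2 ^ j := one_le_pow₀ one_le_two
  have e : (2:ℝ) ^ (j+2) = 2 ^ j * 4 := by ring
  rw [e]
  nlinarith [sq_nonneg ((2:ℝ)^j), h3.le]

/-- tail factor bound -/
lemma gg_le_exp (k i : ℕ) : gg k (k + 1 + i) ≤ Real.exp (2 * (1/2:ℝ) ^ i) := by
  have h : k < k + 1 + i := by omega
  have key : gg k (k + 1 + i) ≤ 1 + 2 * (1/2:ℝ) ^ i := by
    rw [gg, if_neg (by omega)]
    have h1 := pow_lt_pow_base2 h
    have h2 : (0:ℝ) < 2 ^ (k+1+i) - 2 ^ k := by linarith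
    rw [div_le_iff₀ h2]
    have e1 : (2:ℝ) ^ (k + 1 + i) = 2 ^ k * 2 * 2 ^ i := by
      rw [pow_add, pow_add]; ring
    have e2 : (1/2:ℝ) ^ i = ((2:ℝ) ^ i)⁻¹ := by
      rw [one_div, inv_pow]
    have hi : (0:ℝ) < 2 ^ i := by positivity
    have hk : (1:ℝ) ≤ 2 ^ k := one_le_pow₀ one_le_two
    rw [e1, e2]
    have expand : (1 + 2 * ((2:ℝ) ^ i)⁻¹) * (2 ^ k * 2 * 2 ^ i - 2 ^ k)
        = 2 ^ k * 2 * 2 ^ i + 3 * 2 ^ k - 2 * 2 ^ k * ((2:ℝ)^i)⁻¹ := by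
      field_simp; ring
    rw [expand]
    have hinv : (2:ℝ) ^ k * ((2:ℝ)^i)⁻¹ ≤ 2 ^ k := by
      apply mul_le_of_le_one_right (by positivity)
      rw [inv_le_one_iff₀]; right; exact one_le_pow₀ one_le_two
    nlinarith [hi, hk]
  calc gg k (k+1+i) ≤ 1 + 2 * (1/2:ℝ) ^ i := key
  _ ≤ Real.exp (2 * (1/2:ℝ)^i) := by
      have := Real.add_one_le_exp (2 * (1/2:ℝ)^i)
      linarith

/-- eval at 1 of the Lagrange basis is ww -/
lemma eval_basis_eq_ww {k N : ℕ} (hk : k ∈ Finset.range N) :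
    Polynomial.eval 1 (Lagrange.basis (Finset.range N) bb k) = ww k N := by
  rw [Lagrange.basis, Polynomial.eval_prod]
  rw [ww, ← Finset.prod_erase (Finset.range N) (show gg k k = 1 by simp [gg])]
  apply Finset.prod_congr rfl
  intro j hj
  have hjk : j ≠ k := (Finset.mem_erase.mp hj).1
  rw [Lagrange.basisDivisor, Polynomial.eval_mul, Polynomial.eval_C, Polynomial.eval_sub,
    Polynomial.eval_X, Polynomial.eval_C, gg, if_neg hjk, bb, bb]
  rw [div_eq_mul_inv]
  ring_nf

/-- Lagrange exactness -/
lemma lagrange_sum {n N : ℕ} (h : n < N) :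
    ∑ k ∈ Finset.range N, ww k N * bb k ^ n = 1 := by
  have hvs := bb_injOn N
  have hdeg : (X ^ n : ℝ[X]).degree < (Finset.range N).card := by
    rw [Polynomial.degree_X_pow, Finset.card_range]
    exact_mod_cast h
  have := Lagrange.eq_interpolate hvs hdeg
  have h1 : Polynomial.eval 1 ((X:ℝ[X]) ^ n) = 1 := by simp
  conv_lhs at h1 => rw [this]
  rw [Lagrange.interpolate_apply, Polynomial.eval_finset_sum] at h1
  rw [← h1]
  refine Finset.sum_congr rfl ?_
  intro k hk
  rw [Polynomial.eval_mul, Polynomial.eval_C, eval_basis_eq_ww hk, Polynomial.eval_pow,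
    Polynomial.eval_X]
  ring

lemma DD_pos (k : ℕ) : 0 < DD k := by
  rw [DD]; positivity

/-- the tail product bound -/
lemma tail_prod_le (k m : ℕ) :
    ∏ i ∈ Finset.range m, gg k (k + 1 + i) ≤ Real.exp 4 := by
  calc ∏ i ∈ Finset.range m, gg k (k + 1 + i)
      ≤ ∏ i ∈ Finset.range m, Real.exp (2 * (1/2:ℝ) ^ i) := by
        apply Finset.prod_le_prod
        · intro i _; exact (gg_pos_of_gt (by omega)).le
        · intro i _; exact gg_le_exp k i
    _ = Real.exp (∑ i ∈ Finset.range m, 2 * (1/2:ℝ) ^ i) := by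
        rw [Real.exp_sum]
    _ ≤ Real.exp 4 := by
        apply Real.exp_le_exp.mpr
        rw [← Finset.mul_sum]
        have := sum_geometric_two_le m
        linarith

/-- decomposition of ww for N = k + 1 + m -/
lemma ww_decomp (k m : ℕ) :
    ww k (k + 1 + m) = (∏ j ∈ Finset.range k, gg k j) *
      ∏ i ∈ Finset.range m, gg k (k + 1 + i) := by
  rw [ww, show k + 1 + m = (k+1) + m from rfl, Finset.prod_range_add, Finset.prod_range_succ]
  simp [gg]

lemma head_prod_le (k : ℕ) : ∏ j ∈ Finset.range k, |gg k j| ≤ DD k := by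
  have e : DD k = ∏ j ∈ Finset.range k, ((2:ℝ) ^ (j+2) / 2 ^ k) := by
    rw [DD, Finset.prod_div_distrib, Finset.prod_const, Finset.card_range]
  rw [e]
  apply Finset.prod_le_prod
  · intro j _; positivity
  · intro j hj; exact abs_gg_le_of_lt (Finset.mem_range.mp hj)

lemma abs_ww_le (k m : ℕ) : |ww k (k + 1 + m)| ≤ Real.exp 4 * DD k := by
  rw [ww_decomp, abs_mul]
  have h1 : |∏ j ∈ Finset.range k, gg k j| ≤ DD k := by
    rw [Finset.abs_prod]; exact head_prod_le k
  have h2 : |∏ i ∈ Finset.range m, gg k (k + 1 + i)| ≤ Real.exp 4 := by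
    rw [abs_of_pos]
    · exact tail_prod_le k m
    · exact Finset.prod_pos fun i _ => gg_pos_of_gt (by omega)
  have h3 : (0:ℝ) ≤ |∏ j ∈ Finset.range k, gg k j| := abs_nonneg _
  calc |∏ j ∈ Finset.range k, gg k j| * |∏ i ∈ Finset.range m, gg k (k+1+i)|
      ≤ DD k * Real.exp 4 := mul_le_mul h1 h2 (abs_nonneg _) (DD_pos k).le
    _ = Real.exp 4 * DD k := by ring

lemma ww_succ (k N : ℕ) : ww k (N + 1) = ww k N * gg k N := Finset.prod_range_succ _ _

/-- sign of ww -/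
lemma sign_ww (k m : ℕ) : 0 < (-1:ℝ) ^ k * ww k (k + 1 + m) := by
  induction m with
  | zero =>
    have e1 : ww k (k + 1) = ∏ j ∈ Finset.range k, gg k j := by
      rw [ww_succ, show gg k k = 1 by simp [gg], mul_one]; rfl
    rw [e1]
    have e2 : ∏ j ∈ Finset.range k, (-(gg k j))
        = (-1:ℝ) ^ k * ∏ j ∈ Finset.range k, gg k j := by
      rw [Finset.prod_congr rfl (fun j _ => neg_eq_neg_one_mul (gg k j)),
        Finset.prod_mul_distrib, Finset.prod_const, Finset.card_range]
    rw [← e2]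
    exact Finset.prod_pos fun j hj => neg_pos.mpr (gg_neg_of_lt (Finset.mem_range.mp hj))
  | succ m ih =>
    have : k + 1 + (m + 1) = (k + 1 + m) + 1 := by omega
    rw [this, ww_succ, ← mul_assoc]
    exact mul_pos ih (gg_pos_of_gt (by omega))

/-- the monotone sequence of absolute values -/
def uu (k m : ℕ) : ℝ := |ww k (k + 1 + m)|

lemma uu_mono (k : ℕ) : Monotone (uu k) := by
  apply monotone_nat_of_le_succ
  intro m
  rw [uu, uu, show k + 1 + (m+1) = (k+1+m)+1 from rfl, ww_succ, abs_mul,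
    abs_of_pos (gg_pos_of_gt (show k < k+1+m by omega))]
  nlinarith [abs_nonneg (ww k (k+1+m)), one_le_gg_of_gt (show k < k+1+m by omega)]

lemma uu_bdd (k : ℕ) : BddAbove (Set.range (uu k)) :=
  ⟨Real.exp 4 * DD k, by rintro x ⟨m, rfl⟩; exact abs_ww_le k m⟩

def aa (k : ℕ) : ℝ := (-1:ℝ) ^ k * ⨆ m, uu k m

lemma tendsto_ww (k : ℕ) : Tendsto (fun N => ww k N) atTop (𝓝 (aa k)) := by
  have h1 : Tendsto (uu k) atTop (𝓝 (⨆ m, uu k m)) :=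
    tendsto_atTop_ciSup (uu_mono k) (uu_bdd k)
  have h2 : Tendsto (fun m => (-1:ℝ)^k * uu k m) atTop (𝓝 (aa k)) := h1.const_mul _
  have habs : ∀ m, uu k m = (-1:ℝ)^k * ww k (k + 1 + m) := by
    intro m
    have := abs_of_pos (sign_ww k m)
    rw [abs_mul, abs_pow, abs_neg, abs_one, one_pow, one_mul] at this
    rw [uu, this]
  have hsq : (-1:ℝ)^k * (-1:ℝ)^k = 1 := by
    rw [← pow_add]; exact Even.neg_one_pow ⟨k, rfl⟩
  have h3 : ∀ m, (-1:ℝ)^k * uu k m = ww k (k + 1 + m) := by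
    intro m
    rw [habs, ← mul_assoc, hsq, one_mul]
  have h2' : Tendsto (fun m => ww k (k + 1 + m)) atTop (𝓝 (aa k)) := by
    apply h2.congr h3
  have h4 : Tendsto (fun N : ℕ => N - (k+1)) atTop atTop := tendsto_sub_atTop_nat _
  have h5 : Tendsto (fun N : ℕ => ww k (k + 1 + (N - (k+1)))) atTop (𝓝 (aa k)) := h2'.comp h4
  apply h5.congr'
  filter_upwards [eventually_ge_atTop (k+1)] with N hN
  congr 1
  omega

lemma abs_bb (k : ℕ) : |bb k| = 2 ^ k := by
  rw [bb, abs_neg, abs_of_pos (by positivity)]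

lemma abs_ww_le' {k N : ℕ} (h : k < N) : |ww k N| ≤ Real.exp 4 * DD k := by
  have : N = k + 1 + (N - (k+1)) := by omega
  rw [this]; exact abs_ww_le k _

lemma abs_aa_le (k : ℕ) : |aa k| ≤ Real.exp 4 * DD k := by
  apply le_of_tendsto (tendsto_ww k).abs
  filter_upwards [eventually_gt_atTop k] with N hN
  exact abs_ww_le' hN

lemma DD_ratio (k : ℕ) : DD (k+1) * 2 ^ k = 2 * DD k := by
  rw [DD, DD, Finset.prod_range_succ, ← pow_mul, ← pow_mul]
  rw [show (k+1)*(k+1) = k*k + (2*k+1) by ring, pow_add]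
  have h1 : ((2:ℝ))^(k*k) ≠ 0 := by positivity
  have h2 : ((2:ℝ))^(2*k+1) ≠ 0 := by positivity
  field_simp
  rw [show 2*k+1 = k + (k+1) by ring, pow_add, pow_succ]
  ring

lemma summable_bound (n : ℕ) :
    Summable (fun k => Real.exp 4 * DD k * ((2:ℝ) ^ k) ^ n) := by
  apply summable_of_ratio_norm_eventually_le (r := (1/2:ℝ)) (by norm_num)
  filter_upwards [eventually_ge_atTop (n+2)] with k hk
  have hpos : ∀ m:ℕ, (0:ℝ) < Real.exp 4 * DD m * ((2:ℝ)^m)^n := by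
    intro m
    have := DD_pos m
    positivity
  rw [Real.norm_eq_abs, Real.norm_eq_abs, abs_of_pos (hpos _), abs_of_pos (hpos _)]
  have h2k : (0:ℝ) < 2 ^ k := by positivity
  have hD1 : DD (k+1) = 2 * DD k / 2 ^ k := by
    have := DD_ratio k
    field_simp
    linarith
  have key : (2:ℝ) * 2 ^ n / 2 ^ k ≤ 1/2 := by
    rw [div_le_iff₀ h2k]
    have hkpow : (2:ℝ) ^ (n+2) ≤ 2 ^ k := pow_le_pow_right₀ one_le_two hk
    have e : (2:ℝ) ^ (n+2) = 2 ^ n * 4 := by rw [pow_add]; ring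
    linarith [e ▸ hkpow]
  have e2 : Real.exp 4 * DD (k+1) * ((2:ℝ)^(k+1))^n
      = (Real.exp 4 * DD k * ((2:ℝ)^k)^n) * ((2:ℝ) * 2^n / 2^k) := by
    rw [hD1, pow_succ, mul_pow]
    field_simp
  rw [e2]
  calc (Real.exp 4 * DD k * ((2:ℝ)^k)^n) * ((2:ℝ) * 2^n / 2^k)
      ≤ (Real.exp 4 * DD k * ((2:ℝ)^k)^n) * (1/2) :=
        mul_le_mul_of_nonneg_left key (hpos k).le
    _ = 1/2 * (Real.exp 4 * DD k * ((2:ℝ)^k)^n) := by ring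

theorem stmt14 :
    ∃ a b : ℕ → ℝ,
      (∀ k, b k < 0) ∧
      Tendsto b atTop atBot ∧
      (∀ n : ℕ, Summable (fun k => |a k| * |b k| ^ n)) ∧
      (∀ n : ℕ, ∑' k, a k * (b k) ^ n = 1) := by
  refine ⟨aa, bb, bb_neg, ?_, ?_, ?_⟩
  · have h : Tendsto (fun k : ℕ => (2:ℝ) ^ k) atTop atTop :=
      tendsto_pow_atTop_atTop_of_one_lt one_lt_two
    exact tendsto_neg_atTop_atBot.comp h
  · intro n
    apply Summable.of_nonneg_of_le (fun k => by positivity) _ (summable_bound n)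
    intro k
    rw [abs_bb]
    exact mul_le_mul_of_nonneg_right (abs_aa_le k) (by positivity)
  · intro n
    set F : ℕ → ℕ → ℝ := fun N k => if k < N then ww k N * bb k ^ n else 0 with hF
    have hbound : ∀ N k, ‖F N k‖ ≤ Real.exp 4 * DD k * ((2:ℝ)^k)^n := by
      intro N k
      have hpos : (0:ℝ) ≤ Real.exp 4 * DD k * ((2:ℝ)^k)^n := by
        have := DD_pos k; positivity
      by_cases h : k < N
      · simp only [hF, if_pos h, Real.norm_eq_abs, abs_mul, abs_pow, abs_bb]
        exact mul_le_mul_of_nonneg_right (abs_ww_le' h) (by positivity)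
      · simp only [hF, if_neg h, norm_zero]; exact hpos
    have hab : ∀ k, Tendsto (fun N => F N k) atTop (𝓝 (aa k * bb k ^ n)) := by
      intro k
      apply (Tendsto.mul_const _ (tendsto_ww k)).congr'
      filter_upwards [eventually_gt_atTop k] with N hN
      simp [hF, hN]
    have hDCT := tendsto_tsum_of_dominated_convergence (summable_bound n) hab
      (Eventually.of_forall hbound)
    have hFsum : ∀ N, n < N → ∑' k, F N k = 1 := by
      intro N hN
      have hz : ∀ k ∉ Finset.range N, F N k = 0 := by
        intro k hk
        have : ¬ k < N := fun hc => hk (Finset.mem_range.mpr hc)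
        simp [hF, this]
      rw [tsum_eq_sum hz, ← lagrange_sum hN]
      refine Finset.sum_congr rfl fun k hk => ?_
      simp [hF, Finset.mem_range.mp hk]
    have hconst : Tendsto (fun N => ∑' k, F N k) atTop (𝓝 1) := by
      apply tendsto_const_nhds.congr'
      filter_upwards [eventually_gt_atTop n] with N hN
      exact (hFsum N hN).symm
    exact tendsto_nhds_unique hDCT hconst


end Seeley
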